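/- arXiv:0904.0608 — 2 statements merged into one kernel-verified Lean document; each statement's English description precedes it below -/
import Mathlib

section
/- Let (P_0, ..., P_m) be a Clifford system on ℝ^{2l} and define F(x) = ⟨x,x⟩² − 2·Σ_{i=0}^{m} ⟨P_i x, x⟩². Then the squared norm of the Euclidean gradient of F satisfies |grad F(x)|² = 16⟨x,x⟩³ for all x ∈ ℝ^{2l}. -/
open scoped RealInnerProductSpace

theorem sq_fderiv' {E : Type*} [NormedAddCommGroup E] [InnerProductSpace ℝ E]
    (f : E → ℝ) (f' : E →L[ℝ] ℝ) (x : E)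
    (h : HasFDerivAt f f' x) : HasFDerivAt (fun y => f y ^ 2) ((2 * f x) • f') x := by
  have := h.mul h
  simp only [sq]
  convert this using 1
  · rfl
  · rfl
  · rfl
  module



/-- For a Clifford system `(P 0, ..., P m)` on `ℝ^{2l}`, the FKM polynomial
`F x = ⟨x,x⟩² - 2 ∑ᵢ ⟨Pᵢ x, x⟩²` satisfies `|grad F(x)|² = 16 ⟨x,x⟩³`. -/
theorem fkm_gradient_eq (l m : ℕ)
    (P : Fin (m + 1) → EuclideanSpace ℝ (Fin (2 * l)) →ₗ[ℝ] EuclideanSpace ℝ (Fin (2 * l)))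
    (hsym : ∀ i (x y : EuclideanSpace ℝ (Fin (2 * l))),
      (inner ℝ (P i x) y : ℝ) = inner ℝ x (P i y))
    (hcliff : ∀ i j (x : EuclideanSpace ℝ (Fin (2 * l))), P i (P j x) + P j (P i x) =
      if i = j then (2 : ℝ) • x else 0)
    (x : EuclideanSpace ℝ (Fin (2 * l))) :
    ‖gradient (fun y : EuclideanSpace ℝ (Fin (2 * l)) =>
        (inner ℝ y y : ℝ) ^ 2 - 2 * ∑ i, (inner ℝ (P i y) y : ℝ) ^ 2) x‖ ^ 2 =
      16 * (inner ℝ x x : ℝ) ^ 3 := by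
  set a : ℝ := ⟪x, x⟫ with ha
  set c : Fin (m + 1) → ℝ := fun i => ⟪P i x, x⟫ with hc
  set g : EuclideanSpace ℝ (Fin (2 * l)) :=
    (4 * a) • x - (8 : ℝ) • ∑ i, c i • P i x with hg
  have horth : ∀ i j, (⟪P i x, P j x⟫ : ℝ) = if i = j then a else 0 := by
    intro i j
    have h1 : (⟪P i x, P j x⟫ : ℝ) + ⟪P j x, P i x⟫ = ⟪x, P i (P j x) + P j (P i x)⟫ := by
      rw [inner_add_right, hsym i x (P j x), hsym j x (P i x)]
    rw [real_inner_comm (P i x) (P j x), hcliff] at h1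
    by_cases hij : i = j
    · simp only [hij, if_true, inner_smul_right] at h1 ⊢
      linarith
    · simp only [hij, if_false, inner_zero_right] at h1 ⊢
      linarith
  have hgrad : HasGradientAt (fun y : EuclideanSpace ℝ (Fin (2 * l)) =>
      (inner ℝ y y : ℝ) ^ 2 - 2 * ∑ i, (inner ℝ (P i y) y : ℝ) ^ 2) g x := by
    rw [hasGradientAt_iff_hasFDerivAt]
    have hq := sq_fderiv' _ _ _ ((hasFDerivAt_id x).inner ℝ (hasFDerivAt_id x))
    have hP := fun i => sq_fderiv' _ _ _
      (((P i).toContinuousLinearMap.hasFDerivAt).inner ℝ (hasFDerivAt_id x))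
    have h2 := hq.sub ((HasFDerivAt.sum (fun i (_ : i ∈ Finset.univ) => hP i)).const_mul (2:ℝ))
    convert h2 using 1
    · rfl
    · rfl
    · ext y; simp [Finset.sum_apply]
    ext h
    simp only [ContinuousLinearMap.sub_apply, ContinuousLinearMap.smul_apply,
      ContinuousLinearMap.comp_apply, ContinuousLinearMap.prod_apply,
      ContinuousLinearMap.coe_id', id_eq, fderivInnerCLM_apply,
      ContinuousLinearMap.sum_apply, LinearMap.coe_toContinuousLinearMap',
      InnerProductSpace.toDual_apply_apply, smul_eq_mul, starRingEnd_apply, star_trivial]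
    rw [hg, inner_sub_left, inner_smul_left, inner_smul_left, sum_inner]
    simp only [inner_smul_left, RCLike.inner_apply, conj_trivial, starRingEnd_apply,
      star_trivial]
    have e1 : ∀ i, (⟪P i h, x⟫ : ℝ) = ⟪P i x, h⟫ := fun i => by
      rw [hsym, real_inner_comm]
    have e2 : (⟪h, x⟫ : ℝ) = ⟪x, h⟫ := real_inner_comm _ _
    simp_rw [e1, e2]
    simp only [← ha]
    have hc' : ∀ i, (⟪P i x, x⟫ : ℝ) = c i := fun _ => rfl
    simp_rw [hc', Finset.mul_sum]
    rw [show (∑ i, 2 * (2 * c i * ((⟪P i x, h⟫ : ℝ) + ⟪P i x, h⟫)))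
        = ∑ i, 8 * (c i * (⟪P i x, h⟫ : ℝ)) from Finset.sum_congr rfl fun i _ => by ring]
    ring
  rw [hgrad.gradient]
  rw [← real_inner_self_eq_norm_sq g, hg]
  have hxc : ∀ i, (⟪x, P i x⟫ : ℝ) = c i := fun i => real_inner_comm _ _
  set B : EuclideanSpace ℝ (Fin (2 * l)) := ∑ i, c i • P i x with hB
  have hxB : (⟪x, B⟫ : ℝ) = ∑ i, c i ^ 2 := by
    rw [hB, inner_sum]
    simp_rw [real_inner_smul_right, hxc, sq]
  have hBB : (⟪B, B⟫ : ℝ) = (∑ i, c i ^ 2) * a := by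
    rw [hB, sum_inner]
    simp_rw [real_inner_smul_left, inner_sum, real_inner_smul_right, horth,
      mul_ite, mul_zero, Finset.sum_ite_eq, Finset.mem_univ, if_true]
    rw [Finset.sum_mul]
    exact Finset.sum_congr rfl fun i _ => by ring
  rw [real_inner_sub_sub_self]
  simp only [real_inner_smul_left, real_inner_smul_right]
  rw [hxB, hBB, ← ha]
  ring
end

section
/- Let Υ be the totally symmetric trace-free 3-tensor on ℝ⁵ determined by the cubic x_5³ + (3/2)x_5(x_1² + x_2²) − 3x_5(x_3² + x_4²) + (3√3/2)x_4(x_1² − x_2²) + 3√3·x_1 x_2 x_3. Then Υ satisfies the Nurowski identity: for all indices j, k, l, m ∈ {1,...,5}, Σ_i (Υ_{ijk}Υ_{lmi} + Υ_{lji}Υ_{kmi} + Υ_{kli}Υ_{jmi}) = δ_{jk}δ_{lm} + δ_{lj}δ_{km} + δ_{kl}δ_{jm}. -/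
def nurE (p : Fin 5) : Fin 5 → ℝ := fun a => if a = p then 1 else 0

def nurAA (i j k : Fin 5) : ℤ :=
  if i = 0 ∧ j = 0 ∧ k = 4 then 1 else
  if i = 0 ∧ j = 4 ∧ k = 0 then 1 else
  if i = 1 ∧ j = 1 ∧ k = 4 then 1 else
  if i = 1 ∧ j = 4 ∧ k = 1 then 1 else
  if i = 2 ∧ j = 2 ∧ k = 4 then -2 else
  if i = 2 ∧ j = 4 ∧ k = 2 then -2 else
  if i = 3 ∧ j = 3 ∧ k = 4 then -2 else
  if i = 3 ∧ j = 4 ∧ k = 3 then -2 else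
  if i = 4 ∧ j = 0 ∧ k = 0 then 1 else
  if i = 4 ∧ j = 1 ∧ k = 1 then 1 else
  if i = 4 ∧ j = 2 ∧ k = 2 then -2 else
  if i = 4 ∧ j = 3 ∧ k = 3 then -2 else
  if i = 4 ∧ j = 4 ∧ k = 4 then 2 else
  0

def nurBB (i j k : Fin 5) : ℤ :=
  if i = 0 ∧ j = 0 ∧ k = 3 then 1 else
  if i = 0 ∧ j = 1 ∧ k = 2 then 1 else
  if i = 0 ∧ j = 2 ∧ k = 1 then 1 else
  if i = 0 ∧ j = 3 ∧ k = 0 then 1 else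
  if i = 1 ∧ j = 0 ∧ k = 2 then 1 else
  if i = 1 ∧ j = 1 ∧ k = 3 then -1 else
  if i = 1 ∧ j = 2 ∧ k = 0 then 1 else
  if i = 1 ∧ j = 3 ∧ k = 1 then -1 else
  if i = 2 ∧ j = 0 ∧ k = 1 then 1 else
  if i = 2 ∧ j = 1 ∧ k = 0 then 1 else
  if i = 3 ∧ j = 0 ∧ k = 0 then 1 else
  if i = 3 ∧ j = 1 ∧ k = 1 then -1 else
  0


theorem nurBase (U : Fin 5 → Fin 5 → Fin 5 → ℝ) (p q r : Fin 5) :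
    (∑ a, ∑ b, ∑ c, U a b c * nurE p a * nurE q b * nurE r c) = U p q r := by
  simp [nurE, mul_ite, ite_mul, mul_one, mul_zero, zero_mul, Finset.sum_ite_eq']

set_option maxHeartbeats 4000000 in
theorem nurKey (U : Fin 5 → Fin 5 → Fin 5 → ℝ)
    (hsym1 : ∀ i j k, U i j k = U j i k)
    (hsym2 : ∀ i j k, U i j k = U i k j)
    (hcubic : ∀ x : Fin 5 → ℝ,
      ∑ i, ∑ j, ∑ k, U i j k * x i * x j * x k =
        (x 4) ^ 3 + (3 / 2) * x 4 * ((x 0) ^ 2 + (x 1) ^ 2)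
          - 3 * x 4 * ((x 2) ^ 2 + (x 3) ^ 2)
          + (3 * Real.sqrt 3 / 2) * x 3 * ((x 0) ^ 2 - (x 1) ^ 2)
          + 3 * Real.sqrt 3 * x 0 * x 1 * x 2) :
    ∀ i j k, U i j k = ((nurAA i j k : ℝ) + Real.sqrt 3 * (nurBB i j k : ℝ)) / 2 := by
  intro i j k
  have h3 := hcubic (fun a => nurE i a + nurE j a + nurE k a)
  have hij := hcubic (fun a => nurE i a + nurE j a)
  have hjk := hcubic (fun a => nurE j a + nurE k a)
  have hik := hcubic (fun a => nurE i a + nurE k a)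
  have hi := hcubic (nurE i)
  have hj := hcubic (nurE j)
  have hk := hcubic (nurE k)
  simp only [mul_add, add_mul, Finset.sum_add_distrib, nurBase U] at h3 hij hjk hik hi hj hk
  have s10 : U i i i = U i i i := hsym1 i i i
  have s20 : U i i i = U i i i := hsym2 i i i
  have s11 : U i i j = U i i j := hsym1 i i j
  have s21 : U i i j = U i j i := hsym2 i i j
  have s12 : U i i k = U i i k := hsym1 i i k
  have s22 : U i i k = U i k i := hsym2 i i k
  have s13 : U i j i = U j i i := hsym1 i j i
  have s23 : U i j i = U i i j := hsym2 i j i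
  have s14 : U i j j = U j i j := hsym1 i j j
  have s24 : U i j j = U i j j := hsym2 i j j
  have s15 : U i j k = U j i k := hsym1 i j k
  have s25 : U i j k = U i k j := hsym2 i j k
  have s16 : U i k i = U k i i := hsym1 i k i
  have s26 : U i k i = U i i k := hsym2 i k i
  have s17 : U i k j = U k i j := hsym1 i k j
  have s27 : U i k j = U i j k := hsym2 i k j
  have s18 : U i k k = U k i k := hsym1 i k k
  have s28 : U i k k = U i k k := hsym2 i k k
  have s19 : U j i i = U i j i := hsym1 j i i
  have s29 : U j i i = U j i i := hsym2 j i i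
  have s110 : U j i j = U i j j := hsym1 j i j
  have s210 : U j i j = U j j i := hsym2 j i j
  have s111 : U j i k = U i j k := hsym1 j i k
  have s211 : U j i k = U j k i := hsym2 j i k
  have s112 : U j j i = U j j i := hsym1 j j i
  have s212 : U j j i = U j i j := hsym2 j j i
  have s113 : U j j j = U j j j := hsym1 j j j
  have s213 : U j j j = U j j j := hsym2 j j j
  have s114 : U j j k = U j j k := hsym1 j j k
  have s214 : U j j k = U j k j := hsym2 j j k
  have s115 : U j k i = U k j i := hsym1 j k i
  have s215 : U j k i = U j i k := hsym2 j k i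
  have s116 : U j k j = U k j j := hsym1 j k j
  have s216 : U j k j = U j j k := hsym2 j k j
  have s117 : U j k k = U k j k := hsym1 j k k
  have s217 : U j k k = U j k k := hsym2 j k k
  have s118 : U k i i = U i k i := hsym1 k i i
  have s218 : U k i i = U k i i := hsym2 k i i
  have s119 : U k i j = U i k j := hsym1 k i j
  have s219 : U k i j = U k j i := hsym2 k i j
  have s120 : U k i k = U i k k := hsym1 k i k
  have s220 : U k i k = U k k i := hsym2 k i k
  have s121 : U k j i = U j k i := hsym1 k j i
  have s221 : U k j i = U k i j := hsym2 k j i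
  have s122 : U k j j = U j k j := hsym1 k j j
  have s222 : U k j j = U k j j := hsym2 k j j
  have s123 : U k j k = U j k k := hsym1 k j k
  have s223 : U k j k = U k k j := hsym2 k j k
  have s124 : U k k i = U k k i := hsym1 k k i
  have s224 : U k k i = U k i k := hsym2 k k i
  have s125 : U k k j = U k k j := hsym1 k k j
  have s225 : U k k j = U k j k := hsym2 k k j
  have s126 : U k k k = U k k k := hsym1 k k k
  have s226 : U k k k = U k k k := hsym2 k k k
  have e00 : ((0:Fin 5) = 0) = True := by decide
  have e01 : ((0:Fin 5) = 1) = False := by decide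
  have e02 : ((0:Fin 5) = 2) = False := by decide
  have e03 : ((0:Fin 5) = 3) = False := by decide
  have e04 : ((0:Fin 5) = 4) = False := by decide
  have e10 : ((1:Fin 5) = 0) = False := by decide
  have e11 : ((1:Fin 5) = 1) = True := by decide
  have e12 : ((1:Fin 5) = 2) = False := by decide
  have e13 : ((1:Fin 5) = 3) = False := by decide
  have e14 : ((1:Fin 5) = 4) = False := by decide
  have e20 : ((2:Fin 5) = 0) = False := by decide
  have e21 : ((2:Fin 5) = 1) = False := by decide
  have e22 : ((2:Fin 5) = 2) = True := by decide
  have e23 : ((2:Fin 5) = 3) = False := by decide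
  have e24 : ((2:Fin 5) = 4) = False := by decide
  have e30 : ((3:Fin 5) = 0) = False := by decide
  have e31 : ((3:Fin 5) = 1) = False := by decide
  have e32 : ((3:Fin 5) = 2) = False := by decide
  have e33 : ((3:Fin 5) = 3) = True := by decide
  have e34 : ((3:Fin 5) = 4) = False := by decide
  have e40 : ((4:Fin 5) = 0) = False := by decide
  have e41 : ((4:Fin 5) = 1) = False := by decide
  have e42 : ((4:Fin 5) = 2) = False := by decide
  have e43 : ((4:Fin 5) = 3) = False := by decide
  have e44 : ((4:Fin 5) = 4) = True := by decide
  have h5 : ∀ z : Fin 5, z = 0 ∨ z = 1 ∨ z = 2 ∨ z = 3 ∨ z = 4 := by decide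
  rcases h5 i with rfl|rfl|rfl|rfl|rfl <;> rcases h5 j with rfl|rfl|rfl|rfl|rfl <;>
      rcases h5 k with rfl|rfl|rfl|rfl|rfl <;>
    (norm_num [nurE, nurAA, nurBB, e00, e01, e02, e03, e04, e10, e11, e12, e13, e14, e20, e21, e22, e23, e24, e30, e31, e32, e33, e34, e40, e41, e42, e43, e44] at h3 hij hjk hik hi hj hk ⊢; linarith)

theorem nurInt1 : ∀ j k l m : Fin 5,
    (∑ i, (nurAA i j k * nurBB l m i + nurBB i j k * nurAA l m i
      + nurAA l j i * nurBB k m i + nurBB l j i * nurAA k m i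
      + nurAA k l i * nurBB j m i + nurBB k l i * nurAA j m i)) = 0 := by decide

theorem nurInt2 : ∀ j k l m : Fin 5,
    (∑ i, (nurAA i j k * nurAA l m i + 3 * (nurBB i j k * nurBB l m i)
      + nurAA l j i * nurAA k m i + 3 * (nurBB l j i * nurBB k m i)
      + nurAA k l i * nurAA j m i + 3 * (nurBB k l i * nurBB j m i)))
    = 4 * ((if j = k then (1:ℤ) else 0) * (if l = m then 1 else 0)
        + (if l = j then (1:ℤ) else 0) * (if k = m then 1 else 0)
        + (if k = l then (1:ℤ) else 0) * (if j = m then 1 else 0)) := by decide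


/-- The totally symmetric 3-tensor `Υ` on `ℝ⁵` determined by Nurowski's cubic
`x₅³ + (3/2)x₅(x₁²+x₂²) - 3x₅(x₃²+x₄²) + (3√3/2)x₄(x₁²-x₂²) + 3√3 x₁x₂x₃`
satisfies the Nurowski identity
`∑ᵢ (Υᵢⱼₖ Υₗₘᵢ + Υₗⱼᵢ Υₖₘᵢ + Υₖₗᵢ Υⱼₘᵢ) = δⱼₖδₗₘ + δₗⱼδₖₘ + δₖₗδⱼₘ`. -/
theorem nurowski_tensor_identity (Υ : Fin 5 → Fin 5 → Fin 5 → ℝ)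
    (hsym1 : ∀ i j k, Υ i j k = Υ j i k)
    (hsym2 : ∀ i j k, Υ i j k = Υ i k j)
    (hcubic : ∀ x : Fin 5 → ℝ,
      ∑ i, ∑ j, ∑ k, Υ i j k * x i * x j * x k =
        (x 4) ^ 3 + (3 / 2) * x 4 * ((x 0) ^ 2 + (x 1) ^ 2)
          - 3 * x 4 * ((x 2) ^ 2 + (x 3) ^ 2)
          + (3 * Real.sqrt 3 / 2) * x 3 * ((x 0) ^ 2 - (x 1) ^ 2)
          + 3 * Real.sqrt 3 * x 0 * x 1 * x 2)
    (j k l m : Fin 5) :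
    ∑ i, (Υ i j k * Υ l m i + Υ l j i * Υ k m i + Υ k l i * Υ j m i) =
      (if j = k then (1 : ℝ) else 0) * (if l = m then 1 else 0)
        + (if l = j then (1 : ℝ) else 0) * (if k = m then 1 else 0)
        + (if k = l then (1 : ℝ) else 0) * (if j = m then 1 else 0) := by
  have key := nurKey Υ hsym1 hsym2 hcubic
  have hs : Real.sqrt 3 * Real.sqrt 3 = 3 := Real.mul_self_sqrt (by norm_num)
  have h1 := congrArg (fun z : ℤ => (z : ℝ)) (nurInt1 j k l m)
  have h2 := congrArg (fun z : ℤ => (z : ℝ)) (nurInt2 j k l m)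
  push_cast at h1 h2
  have hpt : ∀ i, Υ i j k * Υ l m i + Υ l j i * Υ k m i + Υ k l i * Υ j m i
      = (1/4) * ((nurAA i j k : ℝ) * nurAA l m i + 3 * ((nurBB i j k : ℝ) * nurBB l m i)
          + (nurAA l j i : ℝ) * nurAA k m i + 3 * ((nurBB l j i : ℝ) * nurBB k m i)
          + (nurAA k l i : ℝ) * nurAA j m i + 3 * ((nurBB k l i : ℝ) * nurBB j m i))
        + (Real.sqrt 3 / 4) * ((nurAA i j k : ℝ) * nurBB l m i + (nurBB i j k : ℝ) * nurAA l m i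
          + (nurAA l j i : ℝ) * nurBB k m i + (nurBB l j i : ℝ) * nurAA k m i
          + (nurAA k l i : ℝ) * nurBB j m i + (nurBB k l i : ℝ) * nurAA j m i) := by
    intro i
    rw [key i j k, key l m i, key l j i, key k m i, key k l i, key j m i]
    linear_combination (((nurBB i j k : ℝ) * nurBB l m i + (nurBB l j i : ℝ) * nurBB k m i
      + (nurBB k l i : ℝ) * nurBB j m i) / 4) * hs
  rw [Finset.sum_congr rfl (fun i _ => hpt i), Finset.sum_add_distrib,
    ← Finset.mul_sum, ← Finset.mul_sum, h1, h2]
  split_ifs <;> norm_num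
end
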